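/- For every (F_1,…,F_m) ∈ Y_m and every 1 ≤ i ≤ m, the image C(F_i ∩ F_{i-1}^⊥) is a one-dimensional subspace of ℂ², and the resulting map φ_m : Y_m → (ℙ¹)^m, (F_1,…,F_m) ↦ (C(F_1 ∩ F_0^⊥), C(F_2 ∩ F_1^⊥), …, C(F_m ∩ F_{m-1}^⊥)), is a bijection. -/

import Mathlib

noncomputable section
namespace Spr

/-! ### Linear algebra setup -/

abbrev Vsp (N : ℕ) := EuclideanSpace ℂ (Fin (2*N))
abbrev C2 := EuclideanSpace ℂ (Fin 2)

/-- The basis vector `e_i` (1-based index). -/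
def eVec (N i : ℕ) : Vsp N :=
  if h : 1 ≤ i ∧ i ≤ N then EuclideanSpace.single (⟨i-1, by omega⟩ : Fin (2*N)) 1 else 0

/-- The basis vector `f_i` (1-based index). -/
def fVec (N i : ℕ) : Vsp N :=
  if h : 1 ≤ i ∧ i ≤ N then EuclideanSpace.single (⟨N+i-1, by omega⟩ : Fin (2*N)) 1 else 0

/-- The standard basis vector `e` of `ℂ²`. -/
def eStd : C2 := EuclideanSpace.single 0 1
/-- The standard basis vector `f` of `ℂ²`. -/
def fStd : C2 := EuclideanSpace.single 1 1

/-- The nilpotent endomorphism `z` with two equal Jordan blocks: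
`z e_1 = 0 = z f_1`, `z e_{i+1} = e_i`, `z f_{i+1} = f_i`. -/
def zMap (N : ℕ) : Vsp N →ₗ[ℂ] Vsp N where
  toFun v := WithLp.toLp 2 (fun j => if h : j.val + 1 < 2*N ∧ j.val + 1 ≠ N then v ⟨j.val+1, h.1⟩ else 0)
  map_add' v w := by
    ext j
    by_cases h : j.val + 1 < 2*N ∧ j.val + 1 ≠ N <;> simp [h, PiLp.add_apply]
  map_smul' c v := by
    ext j
    by_cases h : j.val + 1 < 2*N ∧ j.val + 1 ≠ N <;> simp [h, PiLp.smul_apply]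

def cIdx (N : ℕ) (j : Fin 2) (i : Fin N) : Fin (2*N) :=
  ⟨if j.val = 0 then i.val else N + i.val, by have := i.isLt; split <;> omega⟩

/-- The linear map `C : ℂ^{2N} → ℂ²`, `e_i ↦ e`, `f_i ↦ f`. -/
def Cmap (N : ℕ) : Vsp N →ₗ[ℂ] C2 where
  toFun v := WithLp.toLp 2 (fun j => ∑ i : Fin N, v (cIdx N j i))
  map_add' v w := by
    ext j
    simp [PiLp.add_apply, Finset.sum_add_distrib]
  map_smul' c v := by
    ext j
    simp [PiLp.smul_apply, Finset.mul_sum]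

/-- The subspace `E_{a,b} = span(e_1,…,e_a,f_1,…,f_b)`. -/
def Esub (N a b : ℕ) : Submodule ℂ (Vsp N) :=
  Submodule.span ℂ ((eVec N '' Set.Icc 1 a) ∪ (fVec N '' Set.Icc 1 b))

/-- Gram coefficients of the symmetric bilinear form `β_D^{2m-k,k}`. -/
def cD (N m k : ℕ) (p q : Fin (2*N)) : ℂ :=
  if k = m then
    (if p.val < N ∧ N ≤ q.val then
      (if (p.val + 1) + (q.val - N + 1) = k + 1 then (-1:ℂ)^(q.val - N) else 0)
    else if N ≤ p.val ∧ q.val < N then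
      (if (p.val - N + 1) + (q.val + 1) = k + 1 then (-1:ℂ)^(p.val - N) else 0)
    else 0)
  else
    (if p.val < N ∧ q.val < N then
      (if (p.val + 1) + (q.val + 1) = 2*m - k + 1 then (-1:ℂ)^(p.val) else 0)
    else if N ≤ p.val ∧ N ≤ q.val then
      (if (p.val - N + 1) + (q.val - N + 1) = k + 1 then (-1:ℂ)^(p.val - N + 1) else 0)
    else 0)

/-- Gram coefficients of the symplectic bilinear form `β_C^{2m-k-1,k-1}`. -/
def cC (N m k : ℕ) (p q : Fin (2*N)) : ℂ :=
  if k = m then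
    (if N ≤ p.val ∧ q.val < N then
      (if (p.val - N + 1) + (q.val + 1) = k then (-1:ℂ)^(p.val - N) else 0)
    else if p.val < N ∧ N ≤ q.val then
      (if (p.val + 1) + (q.val - N + 1) = k then -(-1:ℂ)^(q.val - N) else 0)
    else 0)
  else
    (if p.val < N ∧ q.val < N then
      (if (p.val + 1) + (q.val + 1) = 2*m - k ∧ p.val < q.val then (-1:ℂ)^(p.val + 1)
       else if (p.val + 1) + (q.val + 1) = 2*m - k ∧ q.val < p.val then (-1:ℂ)^(p.val)
       else 0)
    else if N ≤ p.val ∧ N ≤ q.val then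
      (if (p.val - N + 1) + (q.val - N + 1) = k ∧ p.val < q.val then (-1:ℂ)^(p.val - N)
       else if (p.val - N + 1) + (q.val - N + 1) = k ∧ q.val < p.val then (-1:ℂ)^(p.val - N + 1)
       else 0)
    else 0)

/-- The bilinear pairing associated to a matrix `c` of coefficients. -/
def bFormFun (N : ℕ) (c : Fin (2*N) → Fin (2*N) → ℂ) (v w : Vsp N) : ℂ :=
  ∑ p : Fin (2*N), ∑ q : Fin (2*N), v p * (c p q * w q)

/-- The symmetric bilinear form `β_D^{2m-k,k}` (extended by zero to all of `ℂ^{2N}`). -/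
def betaD (N m k : ℕ) : Vsp N → Vsp N → ℂ := bFormFun N (cD N m k)

/-- The symplectic bilinear form `β_C^{2m-k-1,k-1}` (extended by zero to all of `ℂ^{2N}`). -/
def betaC (N m k : ℕ) : Vsp N → Vsp N → ℂ := bFormFun N (cC N m k)

/-- A subspace is isotropic with respect to a bilinear form. -/
def IsIsotropic {N : ℕ} (B : Vsp N → Vsp N → ℂ) (W : Submodule ℂ (Vsp N)) : Prop :=
  ∀ v ∈ W, ∀ w ∈ W, B v w = 0

lemma bFormFun_add_left {N : ℕ} (c : Fin (2*N) → Fin (2*N) → ℂ) (v v' w : Vsp N) :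
    bFormFun N c (v + v') w = bFormFun N c v w + bFormFun N c v' w := by
  simp [bFormFun, PiLp.add_apply, add_mul, Finset.sum_add_distrib]

lemma bFormFun_smul_left {N : ℕ} (c : Fin (2*N) → Fin (2*N) → ℂ) (s : ℂ) (v w : Vsp N) :
    bFormFun N c (s • v) w = s * bFormFun N c v w := by
  simp [bFormFun, PiLp.smul_apply, smul_eq_mul, mul_assoc, Finset.mul_sum]

lemma bFormFun_zero_left {N : ℕ} (c : Fin (2*N) → Fin (2*N) → ℂ) (w : Vsp N) :
    bFormFun N c 0 w = 0 := by
  simp [bFormFun]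

/-- `{v ∈ E | ∀ w ∈ F, B(v,w) = 0}` for the bilinear form with coefficients `c`. -/
def perpB (N : ℕ) (c : Fin (2*N) → Fin (2*N) → ℂ) (E F : Submodule ℂ (Vsp N)) :
    Submodule ℂ (Vsp N) where
  carrier := {v | v ∈ E ∧ ∀ w ∈ F, bFormFun N c v w = 0}
  add_mem' := by
    rintro x y ⟨hxE, hx⟩ ⟨hyE, hy⟩
    exact ⟨E.add_mem hxE hyE, fun w hw => by
      rw [bFormFun_add_left, hx w hw, hy w hw, add_zero]⟩
  zero_mem' := ⟨E.zero_mem, fun w hw => bFormFun_zero_left c w⟩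
  smul_mem' := by
    rintro s x ⟨hxE, hx⟩
    exact ⟨E.smul_mem s hxE, fun w hw => by
      rw [bFormFun_smul_left, hx w hw, mul_zero]⟩

/-- `F^{⊥_D}`, the orthogonal of `F` inside `E_{2m-k,k}` with respect to `β_D`. -/
def perpD (N m k : ℕ) (F : Submodule ℂ (Vsp N)) : Submodule ℂ (Vsp N) :=
  perpB N (cD N m k) (Esub N (2*m-k) k) F

/-- `F^{⊥_C}`, the orthogonal of `F` inside `E_{2m-k-1,k-1}` with respect to `β_C`. -/
def perpC (N m k : ℕ) (F : Submodule ℂ (Vsp N)) : Submodule ℂ (Vsp N) :=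
  perpB N (cC N m k) (Esub N (2*m-k-1) (k-1)) F

/-- Membership in the Cautis–Kamnitzer variety `Y`: a flag `F_0 ⊆ F_1 ⊆ … ⊆ F_{len-1}` with
`F_0 = 0`, `dim F_i = i`, and `z F_i ⊆ F_{i-1}`. -/
def InY (N len : ℕ) (F : Fin len → Submodule ℂ (Vsp N)) : Prop :=
  (∀ i : Fin len, i.val = 0 → F i = ⊥) ∧
  ∀ i j : Fin len, j.val = i.val + 1 →
    Module.finrank ℂ ↥(F j) = j.val ∧ F i ≤ F j ∧
      Submodule.map (zMap N) (F j) ≤ F i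

/-- Membership in the embedded type `D` Springer fiber `Fl^{2m-k,k}_D ⊆ Y_m`. -/
def InFlD (N m k : ℕ) (F : Fin (m+1) → Submodule ℂ (Vsp N)) : Prop :=
  InY N (m+1) F ∧ F (Fin.last m) ≤ Esub N (2*m-k) k ∧
    IsIsotropic (betaD N m k) (F (Fin.last m))

/-- Membership in the embedded type `C` Springer fiber `Fl^{2m-k-1,k-1}_C ⊆ Y_{m-1}`;
here `G : Fin m → _` is the flag `(G_0,…,G_{m-1})`. -/
def InFlC (N m k : ℕ) (G : Fin m → Submodule ℂ (Vsp N)) : Prop :=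
  InY N m G ∧ ∀ i : Fin m, i.val = m - 1 →
    G i ≤ Esub N (2*m-k-1) (k-1) ∧ IsIsotropic (betaC N m k) (G i)

/-! ### Cup diagrams -/

/-- A (dotted) cup diagram on the vertices `{1,…,m}`. -/
structure CupDiagram (m : ℕ) where
  cups : Finset (ℕ × ℕ)
  dottedCups : Finset (ℕ × ℕ)
  dottedRays : Finset ℕ
  cups_valid : ∀ p ∈ cups, 1 ≤ p.1 ∧ p.1 < p.2 ∧ p.2 ≤ m
  cups_disjoint : ∀ p ∈ cups, ∀ q ∈ cups, p ≠ q →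
    p.1 ≠ q.1 ∧ p.1 ≠ q.2 ∧ p.2 ≠ q.1 ∧ p.2 ≠ q.2
  noncrossing : ∀ p ∈ cups, ∀ l, p.1 < l → l < p.2 →
    ∃ q ∈ cups, (l = q.1 ∨ l = q.2) ∧ p.1 < q.1 ∧ q.2 < p.2
  dottedCups_sub : dottedCups ⊆ cups
  dottedRays_valid : ∀ r ∈ dottedRays, 1 ≤ r ∧ r ≤ m ∧ ∀ p ∈ cups, r ≠ p.1 ∧ r ≠ p.2
  dottedCups_cond : ∀ p ∈ dottedCups,
    (∀ q ∈ cups, ¬(q.1 < p.1 ∧ p.2 < q.2)) ∧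
    (∀ r, p.2 < r → r ≤ m → ∃ q ∈ cups, r = q.1 ∨ r = q.2)
  dottedRays_cond : ∀ r ∈ dottedRays, ∀ r', r < r' → r' ≤ m →
    ∃ q ∈ cups, r' = q.1 ∨ r' = q.2

/-- The vertex `v` carries a ray of the cup diagram `a`. -/
def CupDiagram.HasRay {m : ℕ} (a : CupDiagram m) (v : ℕ) : Prop :=
  1 ≤ v ∧ v ≤ m ∧ ∀ p ∈ a.cups, v ≠ p.1 ∧ v ≠ p.2

/-- The total number of dots of a cup diagram. -/
def CupDiagram.dots {m : ℕ} (a : CupDiagram m) : ℕ :=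
  a.dottedCups.card + a.dottedRays.card

/-! ### The sets `T_a ⊆ (ℙ¹)^m` -/

/-- The subset `T_a ⊆ (ℙ¹)^m` attached to a cup diagram `a ∈ B^{2m-k,k}`
(tuples are `0`-indexed: the coordinate `l i` corresponds to the vertex `i+1`). -/
def Ta (m k : ℕ) (a : CupDiagram m) : Set (Fin m → Submodule ℂ C2) :=
  {l | (∀ i : Fin m, Module.finrank ℂ ↥(l i) = 1) ∧
       (∀ i j : Fin m, (i.val+1, j.val+1) ∈ a.cups → (i.val+1, j.val+1) ∉ a.dottedCups →
          l j = (l i)ᗮ) ∧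
       (∀ i j : Fin m, (i.val+1, j.val+1) ∈ a.dottedCups → l i = l j) ∧
       (if k = m then
          ∀ i : Fin m, a.HasRay (i.val+1) →
            (i.val+1 ∉ a.dottedRays → l i = Submodule.span ℂ {fStd}) ∧
            (i.val+1 ∈ a.dottedRays → l i = Submodule.span ℂ {eStd})
        else
          ∀ i : Fin m, a.HasRay (i.val+1) →
            ((∃ r, a.HasRay r ∧ i.val+1 < r) → l i = Submodule.span ℂ {eStd}) ∧
            ((∀ r, a.HasRay r → r ≤ i.val+1) →
              l i = Submodule.span ℂ
                {(if (m-k) % 2 = 0 then (1:ℂ) else Complex.I) • eStd +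
                 (if i.val+1 ∈ a.dottedRays then (1:ℂ) else (-1:ℂ)) • fStd}))}

/-- The compatibility `C(F_{i} ∩ F_{i-1}^⊥) = l_i` for all `1 ≤ i ≤ m`. -/
def Compat (N m : ℕ) (F : Fin (m+1) → Submodule ℂ (Vsp N))
    (l : Fin m → Submodule ℂ C2) : Prop :=
  ∀ i : Fin m, Submodule.map (Cmap N) (F i.succ ⊓ (F i.castSucc)ᗮ) = l i

/-! ### Spheres and the topological Springer fiber -/

abbrev E3 := EuclideanSpace ℝ (Fin 3)
abbrev Sph : Type := ↥(Metric.sphere (0 : E3) 1)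

/-- The point `p = (0,0,1)`. -/
def pPt : E3 := EuclideanSpace.single 2 1
/-- The point `q = (1,0,0)`. -/
def qPt : E3 := EuclideanSpace.single 0 1

/-- The submanifold `S_a ⊆ (S²)^m` attached to a cup diagram `a`
(tuples are `0`-indexed: the coordinate `x i` corresponds to the vertex `i+1`). -/
def Sa (m : ℕ) (a : CupDiagram m) : Set (Fin m → Sph) :=
  {x | (∀ i j : Fin m, (i.val+1, j.val+1) ∈ a.cups →
          ((i.val+1, j.val+1) ∉ a.dottedCups → (x i : E3) = -(x j : E3)) ∧
          ((i.val+1, j.val+1) ∈ a.dottedCups → (x i : E3) = (x j : E3))) ∧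
       (∀ i : Fin m, a.HasRay (i.val+1) →
          (i.val+1 ∈ a.dottedRays → (x i : E3) = pPt) ∧
          (i.val+1 ∉ a.dottedRays →
            ((∀ r, a.HasRay r → r ≤ i.val+1) → (x i : E3) = -pPt) ∧
            ((∃ r, a.HasRay r ∧ i.val+1 < r) → (x i : E3) = qPt)))}

/-! ### Circle diagrams -/

/-- The edge relation of the circle diagram `\bar a b`. -/
def EdgeRel (m : ℕ) (a b : CupDiagram m) (i j : ℕ) : Prop :=
  (i, j) ∈ a.cups ∨ (j, i) ∈ a.cups ∨ (i, j) ∈ b.cups ∨ (j, i) ∈ b.cups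

/-- Two vertices lie in the same connected component of the circle diagram. -/
def Reach (m : ℕ) (a b : CupDiagram m) : ℕ → ℕ → Prop :=
  Relation.ReflTransGen (EdgeRel m a b)

/-- The number of dots on the connected component of the vertex `v` in the
circle diagram `\bar a b`. -/
def compDots (m : ℕ) (a b : CupDiagram m) (v : ℕ) : ℕ :=
  {p : ℕ × ℕ | p ∈ a.dottedCups ∧ Reach m a b v p.1 ∧ Reach m a b v p.2}.ncard +
  {p : ℕ × ℕ | p ∈ b.dottedCups ∧ Reach m a b v p.1 ∧ Reach m a b v p.2}.ncard +
  {r : ℕ | r ∈ a.dottedRays ∧ Reach m a b v r}.ncard +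
  {r : ℕ | r ∈ b.dottedRays ∧ Reach m a b v r}.ncard

/-- The connected component of `v` in the circle diagram is closed, i.e. none of
its vertices carries a ray of `a` or of `b`. -/
def IsClosedCompAt (m : ℕ) (a b : CupDiagram m) (v : ℕ) : Prop :=
  ∀ w, Reach m a b v w → ¬ a.HasRay w ∧ ¬ b.HasRay w

/-- The number of closed connected components of the circle diagram `\bar a b`. -/
def numClosed (m : ℕ) (a b : CupDiagram m) : ℕ :=
  {s : Set ℕ | ∃ v, 1 ≤ v ∧ v ≤ m ∧ IsClosedCompAt m a b v ∧
      s = {w | Reach m a b v w}}.ncard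

/-! ### The diffeomorphism `γ_{n-k,k}` -/

/-- Stereographic projection `S² \ {p} → ℂ`. -/
def sigmaProj (v : E3) : ℂ :=
  Complex.ofReal (v 0 / (1 - v 2)) + Complex.I * Complex.ofReal (v 1 / (1 - v 2))

open scoped Classical in
/-- The map `γ : S² → ℙ¹` (extended to the ambient space `ℝ³`). -/
def gammaAmb (v : E3) : Submodule ℂ C2 :=
  if v = pPt then Submodule.span ℂ {eStd}
  else Submodule.span ℂ {sigmaProj v • eStd + fStd}

/-- The coordinate swap `s(x,y,z) = (x,z,y)`. -/
def sSwap (v : E3) : E3 := WithLp.toLp 2 (fun j => v (if j.val = 1 then (2 : Fin 3) else if j.val = 2 then 1 else 0))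
/-- The coordinate swap `t(x,y,z) = (z,y,x)`. -/
def tSwap (v : E3) : E3 := WithLp.toLp 2 (fun j => v (if j.val = 0 then (2 : Fin 3) else if j.val = 2 then 0 else 1))

/-- The diffeomorphism `γ_{n-k,k} : (S²)^m → (ℙ¹)^m`. -/
def gammaNK (m k : ℕ) (x : Fin m → Sph) : Fin m → Submodule ℂ C2 := fun i =>
  if k = m then gammaAmb (x i)
  else if (m - k) % 2 = 1 then gammaAmb (tSwap (x i))
  else gammaAmb (sSwap (x i))

/-! ### Jordan types and special simultaneous Jordan systems -/

/-- The nilpotent endomorphism induced by `z` on the subquotient `W/F` has Jordan type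
`(a,b)`, encoded via the dimensions of the kernels of its powers:
`dim ker((z̄)^j) = min(j,a) + min(j,b)` for all `j`. -/
def HasJordanTypeOn (N : ℕ) (W F : Submodule ℂ (Vsp N)) (a b : ℕ) : Prop :=
  ∀ j : ℕ, Module.finrank ℂ ↥(W ⊓ Submodule.comap (zMap N ^ j) F)
    = min j a + min j b + Module.finrank ℂ ↥F

/-- A special simultaneous Jordan system at level `i` for the subspace `Fi = F_i`
(Definition of Ehrig–Stroppel–Wilbert, Definition 4.4 of the paper). -/
def SpecialSJS (N m k : ℕ) (Fi : Submodule ℂ (Vsp N)) (i : ℕ) (ev fv : ℕ → Vsp N) : Prop :=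
  (∀ j, 1 ≤ j → j + 1 ≤ m - i → zMap N (ev (j+1)) = ev j ∧ zMap N (fv (j+1)) = fv j) ∧
  (zMap N (ev 1) ∈ Fi ∧ zMap N (fv 1) ∈ Fi) ∧
  (∀ j, 1 ≤ j → j ≤ m - i → ev j ∈ perpD N m k Fi ∧ fv j ∈ perpD N m k Fi) ∧
  (∀ j, 1 ≤ j → j ≤ m - i - 1 → ev j ∈ perpC N m k Fi ∧ fv j ∈ perpC N m k Fi) ∧
  LinearIndependent ℂ (fun s : Fin (m-i) ⊕ Fin (m-i) =>
    (Submodule.Quotient.mk (Sum.elim (fun t => ev (t.val+1)) (fun t => fv (t.val+1)) s) :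
      Vsp N ⧸ Fi)) ∧
  (perpD N m k Fi
     = Fi ⊔ Submodule.span ℂ ((ev '' Set.Icc 1 (m-i)) ∪ (fv '' Set.Icc 1 (m-i)))) ∧
  (perpC N m k Fi
     = Fi ⊔ Submodule.span ℂ ((ev '' Set.Icc 1 (m-i-1)) ∪ (fv '' Set.Icc 1 (m-i-1)))) ∧
  (∀ j j', 1 ≤ j → j ≤ m-i → 1 ≤ j' → j' ≤ m-i →
      betaD N m k (fv j) (ev j') = (if j + j' = m - i + 1 then (-1:ℂ)^(j-1) else 0) ∧
      betaD N m k (ev j) (ev j') = 0 ∧ betaD N m k (fv j) (fv j') = 0) ∧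
  (∀ j j', 1 ≤ j → j ≤ m-i-1 → 1 ≤ j' → j' ≤ m-i-1 →
      betaC N m k (fv j) (ev j') = (if j + j' = m - i then (-1:ℂ)^(j-1) else 0) ∧
      betaC N m k (ev j') (fv j) = -(if j + j' = m - i then (-1:ℂ)^(j-1) else 0) ∧
      betaC N m k (ev j) (ev j') = 0 ∧ betaC N m k (fv j) (fv j') = 0) ∧
  (∀ j j', 1 ≤ j → j ≤ m-i → 1 ≤ j' → j' ≤ m-i →
      (inner ℂ (ev j) (ev j') : ℂ) = (if j = j' then 1 else 0) ∧
      (inner ℂ (fv j) (fv j') : ℂ) = (if j = j' then 1 else 0) ∧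
      (inner ℂ (ev j) (fv j') : ℂ) = 0) ∧
  (∀ j, 1 ≤ j → j ≤ m-i → ev j ∈ Fiᗮ ∧ fv j ∈ Fiᗮ) ∧
  (∀ j, 2 ≤ j → j ≤ m-i → Cmap N (ev j) = Cmap N (zMap N (ev j)) ∧
      Cmap N (fv j) = Cmap N (zMap N (fv j)))

/-! ### Auxiliary development for Statement 18 -/

section CK18

open Module

variable {N : ℕ}

lemma zMap_apply (v : Vsp N) (p : Fin (2*N)) :
    zMap N v p = if h : p.val + 1 < 2*N ∧ p.val + 1 ≠ N then v ⟨p.val+1, h.1⟩ else 0 := rfl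

/-- membership predicate for the coordinate subspace `E_j` -/
def coordP (N j pv : ℕ) : Prop := (j ≤ pv ∧ pv < N) ∨ N + j ≤ pv

/-- the coordinate subspace `E_j = span(e_1,…,e_j,f_1,…,f_j)` -/
def coord (N j : ℕ) : Submodule ℂ (Vsp N) where
  carrier := {v | ∀ p : Fin (2*N), coordP N j p.val → v p = 0}
  add_mem' := by
    intro a b ha hb p hp
    show a p + b p = 0
    rw [ha p hp, hb p hp, add_zero]
  zero_mem' := by intro p _; rfl
  smul_mem' := by
    intro c a ha p hp
    show c * a p = 0
    rw [ha p hp, mul_zero]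

lemma mem_coord {j : ℕ} {v : Vsp N} :
    v ∈ coord N j ↔ ∀ p : Fin (2*N), coordP N j p.val → v p = 0 := Iff.rfl

lemma coord_mono {j j' : ℕ} (h : j ≤ j') : coord N j ≤ coord N j' := by
  intro v hv p hp
  exact hv p (by unfold coordP at hp ⊢; omega)

lemma coord_step {j : ℕ} {v : Vsp N} (h : zMap N v ∈ coord N j) : v ∈ coord N (j+1) := by
  intro p hp
  have hplt := p.isLt
  have h1 : 1 ≤ p.val ∧ p.val ≠ N := by unfold coordP at hp; omega
  have h2 : coordP N j ((⟨p.val - 1, by omega⟩ : Fin (2*N)).val) := by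
    show coordP N j (p.val - 1)
    unfold coordP at hp ⊢; omega
  have h3 := h _ h2
  rw [zMap_apply, dif_pos (show (p.val-1)+1 < 2*N ∧ (p.val-1)+1 ≠ N by omega)] at h3
  have hpp : (⟨p.val-1+1, by omega⟩ : Fin (2*N)) = p := Fin.ext (by simp; omega)
  rwa [hpp] at h3

/-- the shift-up map, adjoint of `z` -/
def zStar (N : ℕ) : Vsp N →ₗ[ℂ] Vsp N where
  toFun v := WithLp.toLp 2 (fun p : Fin (2*N) => if 1 ≤ p.val ∧ p.val ≠ N then v ⟨p.val - 1, by have := p.isLt; omega⟩ else 0)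
  map_add' a b := by
    ext p
    by_cases h : 1 ≤ p.val ∧ p.val ≠ N <;> simp [h, PiLp.add_apply]
  map_smul' c a := by
    ext p
    by_cases h : 1 ≤ p.val ∧ p.val ≠ N <;> simp [h, PiLp.smul_apply]

lemma zStar_apply (v : Vsp N) (p : Fin (2*N)) :
    zStar N v p
      = if 1 ≤ p.val ∧ p.val ≠ N then v ⟨p.val - 1, by have := p.isLt; omega⟩ else 0 := rfl

lemma z_zStar {j : ℕ} (hjN : j < N) {x : Vsp N} (hx : x ∈ coord N j) :
    zMap N (zStar N x) = x := by
  ext p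
  have hplt := p.isLt
  rw [zMap_apply]
  by_cases h : p.val + 1 < 2*N ∧ p.val + 1 ≠ N
  · rw [dif_pos h, zStar_apply, if_pos (show 1 ≤ p.val+1 ∧ p.val+1 ≠ N by omega)]
    have hpp : (⟨p.val + 1 - 1, by omega⟩ : Fin (2*N)) = p := Fin.ext (show p.val + 1 - 1 = p.val by omega)
    rw [hpp]
  · rw [dif_neg h]
    exact (hx p (by unfold coordP; omega)).symm

lemma eq_zero_of_eq_z {v : Vsp N} (h : v = zMap N v) : v = 0 := by
  have key : ∀ t (p : Fin (2*N)), 2*N - p.val ≤ t → v p = 0 := by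
    intro t
    induction t with
    | zero => intro p hp; have := p.isLt; omega
    | succ t ih =>
      intro p hp
      have hv : v p = zMap N v p := by rw [← h]
      rw [zMap_apply] at hv
      by_cases hc : p.val + 1 < 2*N ∧ p.val + 1 ≠ N
      · rw [dif_pos hc] at hv
        rw [hv]
        exact ih ⟨p.val+1, hc.1⟩ (show 2*N - (p.val+1) ≤ t by omega)
      · rwa [dif_neg hc] at hv
  ext p
  exact key (2*N) p (by omega)

lemma one_sub_z_surjOn (W : Submodule ℂ (Vsp N)) (hW : Submodule.map (zMap N) W ≤ W) :
    ∀ y ∈ W, ∃ x ∈ W, x - zMap N x = y := by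
  set f : Vsp N →ₗ[ℂ] Vsp N := LinearMap.id - zMap N with hfdef
  have hf : ∀ x ∈ W, f x ∈ W := by
    intro x hx
    have hx2 : f x = x - zMap N x := rfl
    rw [hx2]
    exact W.sub_mem hx (hW ⟨x, hx, rfl⟩)
  have hinj : Function.Injective (f.restrict hf) := by
    intro a b hab
    have h1 : a.val - zMap N a.val = b.val - zMap N b.val := by
      have h2 := congrArg Subtype.val hab
      simpa [hfdef, LinearMap.restrict_apply, LinearMap.sub_apply] using h2
    have h3 : a.val - b.val = zMap N a.val - zMap N b.val := sub_eq_sub_iff_sub_eq_sub.mp h1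
    rw [← map_sub] at h3
    have h4 := eq_zero_of_eq_z h3
    exact Subtype.ext (by rwa [sub_eq_zero] at h4)
  have hsurj := LinearMap.injective_iff_surjective.mp hinj
  intro y hy
  obtain ⟨x, hx⟩ := hsurj ⟨y, hy⟩
  refine ⟨x.val, x.2, ?_⟩
  have h5 := congrArg Subtype.val hx
  simpa [LinearMap.restrict_apply, hfdef, LinearMap.sub_apply] using h5

lemma mem_of_one_sub_z_mem (W : Submodule ℂ (Vsp N)) (hW : Submodule.map (zMap N) W ≤ W)
    {x : Vsp N} (hx : x - zMap N x ∈ W) : x ∈ W := by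
  obtain ⟨y, hyW, hy⟩ := one_sub_z_surjOn W hW _ hx
  have h1 : y - x = zMap N y - zMap N x := sub_eq_sub_iff_sub_eq_sub.mp hy
  rw [← map_sub] at h1
  have h2 := eq_zero_of_eq_z h1
  have h3 : y = x := by rwa [sub_eq_zero] at h2
  rwa [← h3]

lemma inner_zStar_right (y x : Vsp N) :
    (inner ℂ y (zStar N x) : ℂ) = inner ℂ (zMap N y) x := by
  classical
  simp only [PiLp.inner_apply, RCLike.inner_apply']
  have hL : ∀ p : Fin (2*N),
      (starRingEnd ℂ) (y p) * zStar N x p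
        = if 1 ≤ p.val ∧ p.val ≠ N
            then (starRingEnd ℂ) (y p) * x ⟨p.val - 1, by have := p.isLt; omega⟩ else 0 := by
    intro p
    rw [zStar_apply]
    split_ifs with h
    · rfl
    · exact mul_zero _
  rw [Finset.sum_congr rfl (fun p _ => hL p), ← Finset.sum_filter]
  rw [← Finset.sum_filter_of_ne (s := Finset.univ)
        (p := fun q : Fin (2*N) => q.val + 1 < 2*N ∧ q.val + 1 ≠ N)
        (f := fun q => (starRingEnd ℂ) (zMap N y q) * x q)
        (by
          intro q _ hq
          by_contra hc
          apply hq
          show (starRingEnd ℂ) (zMap N y q) * x q = 0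
          rw [zMap_apply, dif_neg hc, map_zero, zero_mul])]
  refine Finset.sum_bij'
    (fun p _ => (⟨p.val - 1, by have := p.isLt; omega⟩ : Fin (2*N)))
    (fun q hq => (⟨q.val + 1, (Finset.mem_filter.mp hq).2.1⟩ : Fin (2*N)))
    ?_ ?_ ?_ ?_ ?_
  · intro p hp
    simp only [Finset.mem_filter, Finset.mem_univ, true_and] at hp ⊢
    have := p.isLt
    omega
  · intro q hq
    simp only [Finset.mem_filter, Finset.mem_univ, true_and] at hq ⊢
    omega
  · intro p hp
    simp only [Finset.mem_filter, Finset.mem_univ, true_and] at hp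
    exact Fin.ext (show p.val - 1 + 1 = p.val by omega)
  · intro q hq
    exact Fin.ext (show q.val + 1 - 1 = q.val by omega)
  · intro p hp
    simp only [Finset.mem_filter, Finset.mem_univ, true_and] at hp
    have hplt := p.isLt
    rw [zMap_apply, dif_pos (show (p.val - 1) + 1 < 2*N ∧ (p.val - 1) + 1 ≠ N by omega)]
    have hpp : (⟨p.val - 1 + 1, by omega⟩ : Fin (2*N)) = p :=
      Fin.ext (show p.val - 1 + 1 = p.val by omega)
    rw [hpp]

/-! #### the cumulative-sum vector -/

/-- `q` contributes to the cumulative sum at `p` -/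
def cumulP (N q p : ℕ) : Prop := q ≤ p ∧ (q < N ↔ p < N)

instance (N q p : ℕ) : Decidable (cumulP N q p) :=
  decidable_of_iff (q ≤ p ∧ (q < N ↔ p < N)) Iff.rfl

/-- block-wise cumulative sums of the coordinates of `v` -/
def cumul (N : ℕ) (v : Vsp N) : Vsp N := WithLp.toLp 2 (fun p : Fin (2*N) =>
  ∑ q : Fin (2*N), if cumulP N q.val p.val then v q else 0)

lemma cumul_apply (v : Vsp N) (p : Fin (2*N)) :
    cumul N v p = ∑ q : Fin (2*N), if cumulP N q.val p.val then v q else 0 := rfl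

lemma cumul_sub (v : Vsp N) : cumul N v - zStar N (cumul N v) = v := by
  ext p
  have hplt := p.isLt
  show cumul N v p - zStar N (cumul N v) p = v p
  rw [zStar_apply]
  by_cases h0 : 1 ≤ p.val ∧ p.val ≠ N
  · rw [if_pos h0, cumul_apply, cumul_apply, ← Finset.sum_sub_distrib]
    have hterm : ∀ q : Fin (2*N),
        ((if cumulP N q.val p.val then v q else 0)
          - (if cumulP N q.val ((⟨p.val - 1, by omega⟩ : Fin (2*N)).val) then v q else 0))
        = if q = p then v q else 0 := by
      intro q
      by_cases hq : q.val = p.val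
      · have hqp : q = p := Fin.ext hq
        subst hqp
        rw [if_pos rfl, if_pos (show cumulP N q.val q.val from ⟨le_rfl, Iff.rfl⟩),
          if_neg (show ¬ cumulP N q.val ((⟨q.val - 1, by omega⟩ : Fin (2*N)).val) by
            show ¬ cumulP N q.val (q.val - 1); unfold cumulP; omega), sub_zero]
      · rw [if_neg (fun hh => hq (congrArg Fin.val hh))]
        have hiff : cumulP N q.val p.val ↔ cumulP N q.val ((⟨p.val - 1, by omega⟩ : Fin (2*N)).val) := by
          show cumulP N q.val p.val ↔ cumulP N q.val (p.val - 1)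
          unfold cumulP; omega
        by_cases hc : cumulP N q.val p.val
        · rw [if_pos hc, if_pos (hiff.mp hc), sub_self]
        · rw [if_neg hc, if_neg (fun hh => hc (hiff.mpr hh)), sub_self]
    rw [Finset.sum_congr rfl (fun q _ => hterm q), Finset.sum_ite_eq' Finset.univ p v,
      if_pos (Finset.mem_univ p)]
  · rw [if_neg h0, sub_zero, cumul_apply]
    rw [Finset.sum_eq_single_of_mem p (Finset.mem_univ p)
      (fun q _ hq => if_neg (by
        have hqv : q.val ≠ p.val := fun hh => hq (Fin.ext hh)
        have hqlt := q.isLt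
        unfold cumulP; omega))]
    rw [if_pos (show cumulP N p.val p.val from ⟨le_rfl, Iff.rfl⟩)]

lemma cIdx0_val (i : Fin N) : (cIdx N 0 i).val = i.val := by simp [cIdx]

lemma cIdx1_val (i : Fin N) : (cIdx N 1 i).val = N + i.val := by simp [cIdx]

lemma sum_block0 (v : Vsp N) :
    ∑ q : Fin (2*N), (if q.val < N then v q else 0) = Cmap N v 0 := by
  have hC : Cmap N v 0 = ∑ i : Fin N, v (cIdx N 0 i) := rfl
  rw [hC, ← Finset.sum_filter]
  refine Finset.sum_bij'
    (fun q hq => (⟨q.val, by simpa using hq⟩ : Fin N))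
    (fun i _ => cIdx N 0 i) ?_ ?_ ?_ ?_ ?_
  · intro q hq; exact Finset.mem_univ _
  · intro i _
    simp only [Finset.mem_filter, Finset.mem_univ, true_and, cIdx0_val]
    exact i.isLt
  · intro q hq; exact Fin.ext (by simp [cIdx0_val])
  · intro i _; exact Fin.ext (by simp [cIdx0_val])
  · intro q hq
    exact congrArg v (Fin.ext (by simp [cIdx0_val])).symm

lemma sum_block1 (v : Vsp N) :
    ∑ q : Fin (2*N), (if N ≤ q.val then v q else 0) = Cmap N v 1 := by
  have hC : Cmap N v 1 = ∑ i : Fin N, v (cIdx N 1 i) := rfl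
  rw [hC, ← Finset.sum_filter]
  refine Finset.sum_bij'
    (fun q hq => (⟨q.val - N, by
      have h1 := q.isLt
      have h2 : N ≤ q.val := by simpa using hq
      omega⟩ : Fin N))
    (fun i _ => cIdx N 1 i) ?_ ?_ ?_ ?_ ?_
  · intro q hq; exact Finset.mem_univ _
  · intro i _
    simp only [Finset.mem_filter, Finset.mem_univ, true_and, cIdx1_val]
    omega
  · intro q hq
    have h2 : N ≤ q.val := by simpa using hq
    exact Fin.ext (by simp [cIdx1_val]; omega)
  · intro i _; exact Fin.ext (by simp [cIdx1_val])
  · intro q hq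
    have h2 : N ≤ q.val := by simpa using hq
    exact congrArg v (Fin.ext (by simp [cIdx1_val]; omega)).symm

lemma cumul_mem_coord {j : ℕ} {v : Vsp N} (hv : v ∈ coord N (j+1)) (hC : Cmap N v = 0) :
    cumul N v ∈ coord N j := by
  intro p hp
  rcases hp with ⟨hjp, hpN⟩ | hNp
  · have h1 : cumul N v p = ∑ q : Fin (2*N), (if q.val < N then v q else 0) := by
      rw [cumul_apply]
      refine Finset.sum_congr rfl fun q _ => ?_
      by_cases hq : q.val < N
      · by_cases hc : cumulP N q.val p.val
        · rw [if_pos hc, if_pos hq]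
        · rw [if_neg hc, if_pos hq]
          exact (hv q (Or.inl ⟨by unfold cumulP at hc; omega, hq⟩)).symm
      · rw [if_neg hq, if_neg (by unfold cumulP; omega)]
    rw [h1, sum_block0, hC]
    rfl
  · have h1 : cumul N v p = ∑ q : Fin (2*N), (if N ≤ q.val then v q else 0) := by
      rw [cumul_apply]
      refine Finset.sum_congr rfl fun q _ => ?_
      by_cases hq : N ≤ q.val
      · by_cases hc : cumulP N q.val p.val
        · rw [if_pos hc, if_pos hq]
        · rw [if_neg hc, if_pos hq]
          refine (hv q (Or.inr ?_)).symm
          have hplt := p.isLt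
          unfold cumulP at hc; omega
      · rw [if_neg hq, if_neg (by
          have hplt := p.isLt
          unfold cumulP; omega)]
    rw [h1, sum_block1, hC]
    rfl

/-! #### the key injectivity lemma -/

lemma key_inj {j : ℕ} (hjN : j + 1 ≤ N) (W : Submodule ℂ (Vsp N))
    (hWc : W ≤ coord N j) (hWz : Submodule.map (zMap N) W ≤ W)
    {v : Vsp N} (hv1 : v ∈ Submodule.comap (zMap N) W) (hv2 : v ∈ Wᗮ)
    (hv3 : Cmap N v = 0) : v = 0 := by
  have hvc : v ∈ coord N (j+1) := coord_step (hWc hv1)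
  set x := cumul N v with hxdef
  have hxc : x ∈ coord N j := cumul_mem_coord hvc hv3
  have hveq : x - zStar N x = v := cumul_sub v
  have hzzx : zMap N (zStar N x) = x := z_zStar (by omega) hxc
  have hzv : zMap N v = zMap N x - x := by
    rw [← hveq, map_sub, hzzx]
  have hxW : x ∈ W := by
    apply mem_of_one_sub_z_mem W hWz
    have h1 : x - zMap N x = -(zMap N v) := by rw [hzv]; abel
    rw [h1]
    exact W.neg_mem hv1
  have hinner : ∀ y' ∈ W, (inner ℂ y' x : ℂ) = 0 := by
    intro y' hy'
    obtain ⟨y, hyW, hyy⟩ := one_sub_z_surjOn W hWz y' hy'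
    have h0 : (inner ℂ y v : ℂ) = 0 := (Submodule.mem_orthogonal W v).mp hv2 y hyW
    rw [← hveq, inner_sub_right, inner_zStar_right] at h0
    rw [← hyy, inner_sub_left]
    exact h0
  have hxx : (inner ℂ x x : ℂ) = 0 := hinner x hxW
  have hx0 : x = 0 := inner_self_eq_zero.mp hxx
  rw [← hveq, hx0, map_zero, sub_zero]

end CK18

/-! #### dimension counts -/

section CK18b

open Module

variable {N : ℕ}

lemma finrank_ker_z (hN : 1 ≤ N) : finrank ℂ ↥(LinearMap.ker (zMap N)) = 2 := by
  have h02 : (0:ℕ) < 2*N := by omega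
  have hN2 : N < 2*N := by omega
  let f : C2 →ₗ[ℂ] Vsp N :=
    { toFun := fun c => WithLp.toLp 2 (fun p : Fin (2*N) => if p.val = 0 then c 0 else if p.val = N then c 1 else 0)
      map_add' := by
        intro a b
        ext p
        show (if p.val = 0 then (a+b) 0 else if p.val = N then (a+b) 1 else 0)
            = (if p.val = 0 then a 0 else if p.val = N then a 1 else 0)
            + (if p.val = 0 then b 0 else if p.val = N then b 1 else 0)
        split_ifs <;> simp [PiLp.add_apply]
      map_smul' := by
        intro c a
        ext p
        show (if p.val = 0 then (c • a) 0 else if p.val = N then (c • a) 1 else 0)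
            = c • (if p.val = 0 then a 0 else if p.val = N then a 1 else 0)
        split_ifs <;> simp [PiLp.smul_apply] }
  have hfap : ∀ (c : C2) (p : Fin (2*N)),
      f c p = if p.val = 0 then c 0 else if p.val = N then c 1 else 0 := fun c p => rfl
  have hinj : Function.Injective f := by
    intro a b hab
    ext i
    have h0 : f a ⟨0, h02⟩ = f b ⟨0, h02⟩ := by rw [hab]
    have hN0 : f a ⟨N, hN2⟩ = f b ⟨N, hN2⟩ := by rw [hab]
    rw [hfap, hfap, if_pos (show ((⟨0, h02⟩ : Fin (2*N))).val = 0 from rfl),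
      if_pos (show ((⟨0, h02⟩ : Fin (2*N))).val = 0 from rfl)] at h0
    rw [hfap, hfap, if_neg (show ¬ ((⟨N, hN2⟩ : Fin (2*N))).val = 0 by show ¬ (N = 0); omega),
      if_neg (show ¬ ((⟨N, hN2⟩ : Fin (2*N))).val = 0 by show ¬ (N = 0); omega),
      if_pos (show ((⟨N, hN2⟩ : Fin (2*N))).val = N from rfl),
      if_pos (show ((⟨N, hN2⟩ : Fin (2*N))).val = N from rfl)] at hN0
    fin_cases i
    · exact h0
    · exact hN0
  have hrange : LinearMap.range f = LinearMap.ker (zMap N) := by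
    apply le_antisymm
    · rintro w ⟨c, rfl⟩
      simp only [LinearMap.mem_ker]
      ext p
      rw [zMap_apply]
      by_cases h : p.val + 1 < 2*N ∧ p.val + 1 ≠ N
      · rw [dif_pos h, hfap,
          if_neg (show ¬ ((⟨p.val+1, h.1⟩ : Fin (2*N))).val = 0 by show ¬ (p.val+1 = 0); omega),
          if_neg (show ¬ ((⟨p.val+1, h.1⟩ : Fin (2*N))).val = N by show ¬ (p.val+1 = N); exact h.2)]
        rfl
      · rw [dif_neg h]
        rfl
    · intro w hw
      have hz : zMap N w = 0 := hw
      have hcoord : ∀ p : Fin (2*N), p.val ≠ 0 → p.val ≠ N → w p = 0 := by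
        intro p h1 h2
        have hplt := p.isLt
        have h3 : zMap N w ⟨p.val - 1, by omega⟩ = 0 := by rw [hz]; rfl
        rw [zMap_apply,
          dif_pos (show p.val-1+1 < 2*N ∧ p.val-1+1 ≠ N by omega)] at h3
        have hpp : (⟨p.val-1+1, by omega⟩ : Fin (2*N)) = p :=
          Fin.ext (show p.val - 1 + 1 = p.val by omega)
        rwa [hpp] at h3
      set c : C2 := WithLp.toLp 2 (fun i : Fin 2 => if i.val = 0 then w ⟨0, h02⟩ else w ⟨N, hN2⟩) with hcdef
      have hc0 : c 0 = w ⟨0, h02⟩ := (if_pos rfl : (if (0:Fin 2).val = 0 then w ⟨0, h02⟩ else w ⟨N, hN2⟩) = _)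
      have hc1 : c 1 = w ⟨N, hN2⟩ := (if_neg (by decide) : (if (1:Fin 2).val = 0 then w ⟨0, h02⟩ else w ⟨N, hN2⟩) = _)
      refine ⟨c, ?_⟩
      ext p
      rw [hfap]
      by_cases h1 : p.val = 0
      · rw [if_pos h1, hc0]
        exact congrArg w (Fin.ext (show (0:ℕ) = p.val by omega))
      · rw [if_neg h1]
        by_cases h2 : p.val = N
        · rw [if_pos h2, hc1]
          exact congrArg w (Fin.ext (show N = p.val by omega))
        · rw [if_neg h2]
          exact (hcoord p h1 h2).symm
  rw [← hrange, LinearMap.finrank_range_of_inj hinj]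
  simp [finrank_euclideanSpace_fin]

lemma W_le_comap {W : Submodule ℂ (Vsp N)} (hWz : Submodule.map (zMap N) W ≤ W) :
    W ≤ Submodule.comap (zMap N) W := fun w hw => hWz ⟨w, hw, rfl⟩

lemma finrank_comap_z {j : ℕ} (hjN : j < N) (W : Submodule ℂ (Vsp N))
    (hWc : W ≤ coord N j) :
    finrank ℂ ↥(Submodule.comap (zMap N) W) = finrank ℂ ↥W + 2 := by
  have hrange : Submodule.map (zMap N) (Submodule.comap (zMap N) W) = W := by
    rw [Submodule.map_comap_eq]
    apply le_antisymm inf_le_right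
    intro w hw
    exact Submodule.mem_inf.mpr ⟨⟨zStar N w, z_zStar hjN (hWc hw)⟩, hw⟩
  have h1 := LinearMap.finrank_range_add_finrank_ker
    ((zMap N).domRestrict (Submodule.comap (zMap N) W))
  rw [LinearMap.range_domRestrict, hrange, LinearMap.ker_domRestrict] at h1
  have hker_le : LinearMap.ker (zMap N) ≤ Submodule.comap (zMap N) W := by
    intro x hx
    have hx0 : zMap N x = 0 := hx
    show zMap N x ∈ W
    rw [hx0]
    exact W.zero_mem
  have he := LinearEquiv.finrank_eq (Submodule.comapSubtypeEquivOfLe hker_le)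
  rw [he, finrank_ker_z (by omega)] at h1
  omega

/-- `K'(W) = Wᗮ ⊓ z⁻¹(W)` -/
def Kp (N : ℕ) (W : Submodule ℂ (Vsp N)) : Submodule ℂ (Vsp N) :=
  Wᗮ ⊓ Submodule.comap (zMap N) W

lemma finrank_Kp {j : ℕ} (hjN : j < N) (W : Submodule ℂ (Vsp N))
    (hWc : W ≤ coord N j) (hWz : Submodule.map (zMap N) W ≤ W) :
    finrank ℂ ↥(Kp N W) = 2 := by
  have h := Submodule.finrank_add_inf_finrank_orthogonal (W_le_comap hWz)
  rw [finrank_comap_z hjN W hWc] at h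
  have : Kp N W = Wᗮ ⊓ Submodule.comap (zMap N) W := rfl
  rw [this]
  omega

lemma finrank_map_of_injOn {p : Submodule ℂ (Vsp N)} {f : Vsp N →ₗ[ℂ] C2}
    (h : ∀ x ∈ p, f x = 0 → x = 0) :
    finrank ℂ ↥(Submodule.map f p) = finrank ℂ ↥p := by
  have h1 := LinearMap.finrank_range_add_finrank_ker (f.domRestrict p)
  rw [LinearMap.range_domRestrict] at h1
  have hker : LinearMap.ker (f.domRestrict p) = ⊥ := by
    ext x
    simp only [LinearMap.mem_ker, LinearMap.domRestrict_apply, Submodule.mem_bot]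
    constructor
    · intro hx
      exact Subtype.ext (h x.val x.2 hx)
    · rintro rfl
      exact map_zero f
  rw [hker] at h1
  simp only [finrank_bot] at h1
  omega

lemma key_inj' {j : ℕ} (hjN : j + 1 ≤ N) (W : Submodule ℂ (Vsp N))
    (hWc : W ≤ coord N j) (hWz : Submodule.map (zMap N) W ≤ W)
    {v : Vsp N} (hv : v ∈ Kp N W) (hv3 : Cmap N v = 0) : v = 0 :=
  key_inj hjN W hWc hWz (Submodule.mem_inf.mp hv).2 (Submodule.mem_inf.mp hv).1 hv3

lemma map_C_Kp_top {j : ℕ} (hjN : j + 1 ≤ N) (W : Submodule ℂ (Vsp N))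
    (hWc : W ≤ coord N j) (hWz : Submodule.map (zMap N) W ≤ W) :
    Submodule.map (Cmap N) (Kp N W) = ⊤ := by
  apply Submodule.eq_top_of_finrank_eq
  rw [finrank_map_of_injOn (fun x hx h0 => key_inj' hjN W hWc hWz hx h0),
    finrank_Kp (by omega) W hWc hWz]
  simp [finrank_euclideanSpace_fin]

/-- two subspaces of `K'(W)` with the same image under `C` agree -/
lemma eq_of_map_C_eq {j : ℕ} (hjN : j + 1 ≤ N) (W : Submodule ℂ (Vsp N))
    (hWc : W ≤ coord N j) (hWz : Submodule.map (zMap N) W ≤ W)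
    {A B : Submodule ℂ (Vsp N)} (hA : A ≤ Kp N W) (hB : B ≤ Kp N W)
    (hAB : Submodule.map (Cmap N) A = Submodule.map (Cmap N) B) : A = B := by
  have main : ∀ {A B : Submodule ℂ (Vsp N)}, A ≤ Kp N W → B ≤ Kp N W →
      Submodule.map (Cmap N) A = Submodule.map (Cmap N) B → A ≤ B := by
    intro A B hA hB hAB x hx
    have hCx : Cmap N x ∈ Submodule.map (Cmap N) B := by
      rw [← hAB]
      exact ⟨x, hx, rfl⟩
    obtain ⟨y, hy, hxy⟩ := hCx
    have hxyK : x - y ∈ Kp N W := (Kp N W).sub_mem (hA hx) (hB hy)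
    have h0 : x - y = 0 := key_inj' hjN W hWc hWz hxyK (by rw [map_sub, hxy, sub_self])
    have h1 : x = y := by rwa [sub_eq_zero] at h0
    rwa [h1]
  exact le_antisymm (main hA hB hAB) (main hB hA hAB.symm)

end CK18b

/-! #### flags and the main bijection -/

section CK18c

open Module

variable {N : ℕ}

lemma flag_facts {m : ℕ} (hmN : m < N) {F : Fin (m+1) → Submodule ℂ (Vsp N)}
    (hF : InY N (m+1) F) :
    ∀ k, (hk : k ≤ m) → (finrank ℂ ↥(F ⟨k, by omega⟩) = k ∧ F ⟨k, by omega⟩ ≤ coord N k ∧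
      Submodule.map (zMap N) (F ⟨k, by omega⟩) ≤ F ⟨k, by omega⟩) := by
  intro k
  induction k with
  | zero =>
    intro hk
    rw [hF.1 ⟨0, by omega⟩ rfl]
    exact ⟨by simp, bot_le, by simp⟩
  | succ k ih =>
    intro hk
    obtain ⟨ih1, ih2, ih3⟩ := ih (by omega)
    obtain ⟨h1, h2, h3⟩ := hF.2 ⟨k, by omega⟩ ⟨k+1, by omega⟩ rfl
    refine ⟨h1, ?_, le_trans h3 h2⟩
    intro v hv
    exact coord_step (ih2 (h3 ⟨v, hv, rfl⟩))

lemma part1 {m : ℕ} (hm : 1 ≤ m) (hmN : m < N) {F : Fin (m+1) → Submodule ℂ (Vsp N)}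
    (hF : InY N (m+1) F) (i : Fin m) :
    finrank ℂ ↥(Submodule.map (Cmap N) (F i.succ ⊓ (F i.castSucc)ᗮ)) = 1 := by
  have him := i.isLt
  obtain ⟨hr, hle, hz⟩ := hF.2 i.castSucc i.succ (by simp)
  have hWc0 := flag_facts hmN hF i.val (by omega)
  have hc : (⟨i.val, by omega⟩ : Fin (m+1)) = i.castSucc := Fin.ext (by simp)
  rw [hc] at hWc0
  obtain ⟨hWr, hWc, hWz⟩ := hWc0
  have hA : F i.succ ⊓ (F i.castSucc)ᗮ ≤ Kp N (F i.castSucc) := by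
    intro x hx
    obtain ⟨hx1, hx2⟩ := Submodule.mem_inf.mp hx
    exact Submodule.mem_inf.mpr ⟨hx2, hz ⟨x, hx1, rfl⟩⟩
  rw [finrank_map_of_injOn (fun x hx h0 => key_inj' (by omega) _ hWc hWz (hA hx) h0)]
  have h3 := Submodule.finrank_add_inf_finrank_orthogonal hle
  have h4 : finrank ℂ ↥(F i.succ) = i.val + 1 := by rw [hr, Fin.val_succ]
  rw [hWr, h4] at h3
  rw [inf_comm (F i.succ) ((F i.castSucc)ᗮ)]
  omega

lemma inj_aux {m : ℕ} (hm : 1 ≤ m) (hmN : m < N) {F F' : Fin (m+1) → Submodule ℂ (Vsp N)}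
    (hF : InY N (m+1) F) (hF' : InY N (m+1) F')
    (heq : (fun i : Fin m => Submodule.map (Cmap N) (F i.succ ⊓ (F i.castSucc)ᗮ))
         = (fun i : Fin m => Submodule.map (Cmap N) (F' i.succ ⊓ (F' i.castSucc)ᗮ))) :
    F = F' := by
  have key : ∀ k, (hk : k ≤ m) → F ⟨k, by omega⟩ = F' ⟨k, by omega⟩ := by
    intro k
    induction k with
    | zero =>
      intro hk
      rw [hF.1 ⟨0, by omega⟩ rfl, hF'.1 ⟨0, by omega⟩ rfl]
    | succ k ih =>
      intro hk
      have hkm : k < m := by omega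
      have hW := ih (by omega)
      set i : Fin m := ⟨k, hkm⟩ with hidef
      have hc : (⟨k, by omega⟩ : Fin (m+1)) = i.castSucc := Fin.ext (by simp [hidef])
      have hs : (⟨k+1, by omega⟩ : Fin (m+1)) = i.succ := Fin.ext (by simp [hidef])
      rw [hs]
      rw [hc] at hW
      obtain ⟨hr, hle, hz⟩ := hF.2 i.castSucc i.succ (by simp)
      obtain ⟨hr', hle', hz'⟩ := hF'.2 i.castSucc i.succ (by simp)
      have hWc0 := flag_facts hmN hF k (by omega)
      rw [hc] at hWc0
      obtain ⟨hWr, hWc, hWz⟩ := hWc0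
      have hφ := congrFun heq i
      rw [← hW] at hφ
      have hA : F i.succ ⊓ (F i.castSucc)ᗮ ≤ Kp N (F i.castSucc) := by
        intro x hx
        obtain ⟨hx1, hx2⟩ := Submodule.mem_inf.mp hx
        exact Submodule.mem_inf.mpr ⟨hx2, hz ⟨x, hx1, rfl⟩⟩
      have hB : F' i.succ ⊓ (F i.castSucc)ᗮ ≤ Kp N (F i.castSucc) := by
        intro x hx
        obtain ⟨hx1, hx2⟩ := Submodule.mem_inf.mp hx
        refine Submodule.mem_inf.mpr ⟨hx2, ?_⟩
        show zMap N x ∈ F i.castSucc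
        rw [hW]
        exact hz' ⟨x, hx1, rfl⟩
      have hAB : F i.succ ⊓ (F i.castSucc)ᗮ = F' i.succ ⊓ (F i.castSucc)ᗮ :=
        eq_of_map_C_eq (j := k) (by omega) (F i.castSucc) hWc hWz hA hB hφ
      have hsup1 : F i.castSucc ⊔ (F i.castSucc)ᗮ ⊓ F i.succ = F i.succ :=
        Submodule.sup_orthogonal_inf_of_hasOrthogonalProjection hle
      have hsup2 : F i.castSucc ⊔ (F i.castSucc)ᗮ ⊓ F' i.succ = F' i.succ := by
        rw [hW]
        exact Submodule.sup_orthogonal_inf_of_hasOrthogonalProjection hle'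
      rw [← hsup1, ← hsup2, inf_comm ((F i.castSucc)ᗮ) (F i.succ),
        inf_comm ((F i.castSucc)ᗮ) (F' i.succ), hAB]
  funext i
  have h := key i.val (by omega)
  have hi : (⟨i.val, by omega⟩ : Fin (m+1)) = i := Fin.ext rfl
  rwa [hi] at h

/-- recursive construction of the flag with prescribed lines -/
noncomputable def Wseq (N : ℕ) (L : ℕ → Submodule ℂ C2) : ℕ → Submodule ℂ (Vsp N)
  | 0 => ⊥
  | k+1 => Wseq N L k ⊔ (Kp N (Wseq N L k) ⊓ Submodule.comap (Cmap N) (L k))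

lemma surj_aux {m : ℕ} (hm : 1 ≤ m) (hmN : m < N) (l : Fin m → Submodule ℂ C2)
    (hl : ∀ i, finrank ℂ ↥(l i) = 1) :
    ∃ F : Fin (m+1) → Submodule ℂ (Vsp N), InY N (m+1) F ∧
      (fun i : Fin m => Submodule.map (Cmap N) (F i.succ ⊓ (F i.castSucc)ᗮ)) = l := by
  classical
  set L : ℕ → Submodule ℂ C2 := fun k => if h : k < m then l ⟨k, h⟩ else ⊤ with hLdef
  set Wf : ℕ → Submodule ℂ (Vsp N) := Wseq N L with hWfdef
  have hWf0 : Wf 0 = ⊥ := rfl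
  have hWfs : ∀ k, Wf (k+1) = Wf k ⊔ (Kp N (Wf k) ⊓ Submodule.comap (Cmap N) (L k)) :=
    fun k => rfl
  have step : ∀ k, (hk : k < m) →
      (Wf k ≤ coord N k ∧ finrank ℂ ↥(Wf k) = k ∧ Submodule.map (zMap N) (Wf k) ≤ Wf k) →
      ((Wf (k+1) ≤ coord N (k+1) ∧ finrank ℂ ↥(Wf (k+1)) = k+1 ∧
          Submodule.map (zMap N) (Wf (k+1)) ≤ Wf (k+1)) ∧
        Submodule.map (zMap N) (Wf (k+1)) ≤ Wf k ∧ Wf k ≤ Wf (k+1) ∧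
        Submodule.map (Cmap N) (Wf (k+1) ⊓ (Wf k)ᗮ) = l ⟨k, hk⟩) := by
    rintro k hk ⟨ihc, ihr, ihz⟩
    have hkN : k + 1 ≤ N := by omega
    set W := Wf k with hWdef
    set Lk := Kp N W ⊓ Submodule.comap (Cmap N) (L k) with hLkdef
    have hLkK : Lk ≤ Kp N W := inf_le_left
    have hLkO : Lk ≤ Wᗮ := le_trans inf_le_left inf_le_left
    have hLkz : Lk ≤ Submodule.comap (zMap N) W := le_trans inf_le_left inf_le_right
    have hLm : L k = l ⟨k, hk⟩ := by rw [hLdef]; exact dif_pos hk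
    have hmapC : Submodule.map (Cmap N) Lk = L k := by
      apply le_antisymm
      · rintro _ ⟨x, hx, rfl⟩
        exact (Submodule.mem_inf.mp hx).2
      · intro c hc
        have hc2 : c ∈ Submodule.map (Cmap N) (Kp N W) := by
          rw [map_C_Kp_top hkN W ihc ihz]
          exact Submodule.mem_top
        obtain ⟨v, hv, rfl⟩ := hc2
        exact ⟨v, Submodule.mem_inf.mpr ⟨hv, hc⟩, rfl⟩
    have hrLk : finrank ℂ ↥Lk = 1 := by
      have h1 := finrank_map_of_injOn (p := Lk) (f := Cmap N)
        (fun x hx h0 => key_inj' hkN W ihc ihz (hLkK hx) h0)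
      rw [hmapC, hLm] at h1
      rw [← h1, hl]
    have hbot : W ⊓ Lk = ⊥ := by
      apply le_antisymm _ bot_le
      exact le_trans (inf_le_inf_left W hLkO) (le_of_eq (Submodule.inf_orthogonal_eq_bot W))
    have hrsup : finrank ℂ ↥(W ⊔ Lk) = k+1 := by
      have h2 := Submodule.finrank_sup_add_finrank_inf_eq W Lk
      rw [hbot, ihr, hrLk] at h2
      simpa using h2
    have hle1 : W ≤ Wf (k+1) := by rw [hWfs k]; exact le_sup_left
    have hle2 : Lk ≤ Wf (k+1) := by rw [hWfs k]; exact le_sup_right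
    have hrk1 : finrank ℂ ↥(Wf (k+1)) = k+1 := by rw [hWfs k]; exact hrsup
    have hzk1 : Submodule.map (zMap N) (Wf (k+1)) ≤ W := by
      rw [hWfs k, Submodule.map_sup]
      exact sup_le ihz (Submodule.map_le_iff_le_comap.mpr hLkz)
    have hck1 : Wf (k+1) ≤ coord N (k+1) := by
      rw [hWfs k]
      apply sup_le (le_trans ihc (coord_mono (by omega)))
      intro x hx
      exact coord_step (ihc (hLkz hx))
    have hinter : Wf (k+1) ⊓ Wᗮ = Lk := by
      have hXr : finrank ℂ ↥(Wf (k+1) ⊓ Wᗮ) = 1 := by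
        have h3 := Submodule.finrank_add_inf_finrank_orthogonal hle1
        rw [ihr, hrk1] at h3
        rw [inf_comm (Wf (k+1)) Wᗮ]
        omega
      have hle3 : Lk ≤ Wf (k+1) ⊓ Wᗮ := le_inf hle2 hLkO
      exact (Submodule.eq_of_le_of_finrank_le hle3 (by omega)).symm
    exact ⟨⟨hck1, hrk1, le_trans hzk1 hle1⟩, hzk1, hle1, by rw [hinter, hmapC, hLm]⟩
  have main : ∀ k, k ≤ m → (Wf k ≤ coord N k ∧ finrank ℂ ↥(Wf k) = k ∧
      Submodule.map (zMap N) (Wf k) ≤ Wf k) := by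
    intro k
    induction k with
    | zero =>
      intro _
      rw [hWf0]
      exact ⟨bot_le, by simp, by simp⟩
    | succ k ih =>
      intro hk
      exact (step k (by omega) (ih (by omega))).1
  refine ⟨fun i => Wf i.val, ⟨?_, ?_⟩, ?_⟩
  · intro i hi
    show Wf i.val = ⊥
    rw [hi, hWf0]
  · intro i j hj
    have hjm : i.val < m := by have := j.isLt; omega
    obtain ⟨⟨_, hr, _⟩, hz1, hle1, _⟩ := step i.val hjm (main i.val (by omega))
    refine ⟨?_, ?_, ?_⟩
    · show finrank ℂ ↥(Wf j.val) = j.val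
      rw [hj]
      exact hr
    · show Wf i.val ≤ Wf j.val
      rw [hj]
      exact hle1
    · show Submodule.map (zMap N) (Wf j.val) ≤ Wf i.val
      rw [hj]
      exact hz1
  · funext i
    have him : i.val < m := i.isLt
    obtain ⟨_, _, _, hphi⟩ := step i.val him (main i.val (by omega))
    show Submodule.map (Cmap N) (Wf i.succ.val ⊓ (Wf i.castSucc.val)ᗮ) = l i
    rw [Fin.val_succ, Fin.coe_castSucc, hphi]

end CK18c

/-- (Cautis–Kamnitzer.) For every flag in `Y_m` the subspaces
`C(F_i ∩ F_{i-1}^⊥)` are lines in `ℂ²`, and the resulting map `φ_m : Y_m → (ℙ¹)^m` is a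
bijection. -/
theorem statement18 (m N : ℕ) (hm : 1 ≤ m) (hN : m < N) :
    (∀ F : Fin (m+1) → Submodule ℂ (Vsp N), InY N (m+1) F →
      ∀ i : Fin m,
        Module.finrank ℂ ↥(Submodule.map (Cmap N) (F i.succ ⊓ (F i.castSucc)ᗮ)) = 1) ∧
    Set.BijOn
      (fun (F : Fin (m+1) → Submodule ℂ (Vsp N)) =>
        fun i : Fin m => Submodule.map (Cmap N) (F i.succ ⊓ (F i.castSucc)ᗮ))
      {F | InY N (m+1) F}
      {l : Fin m → Submodule ℂ C2 | ∀ i, Module.finrank ℂ ↥(l i) = 1} := by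
  constructor
  · intro F hF i
    exact part1 hm hN hF i
  · refine ⟨?_, ?_, ?_⟩
    · intro F hF i
      exact part1 hm hN hF i
    · intro F hF F' hF' heq
      exact inj_aux hm hN hF hF' heq
    · intro l hl
      obtain ⟨F, hFY, hphi⟩ := surj_aux hm hN l hl
      exact ⟨F, hFY, hphi⟩


end Spr
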